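/- Fix a commutative ring R and n : ℕ with n ≥ 1. Let C be the free R-module with basis {e_{i,j} | i, j ∈ Fin n, j ≤ i}, with coproduct Δ(e_{i,j}) = Σ_{k : j ≤ k ≤ i} e_{k,j} ⊗ e_{i,k} and counit ε(e_{i,j}) = δ_{i,j}. Let V₁ ⊆ C be the R-span of the basis elements e_{i,0} with i > 0 (the strictly-below-diagonal entries of the first column), and define the R-linear map ρ : V₁ → V₁ ⊗[R] C by ρ(e_{i,0}) = Σ_{k : 1 ≤ k ≤ i} e_{k,0} ⊗ e_{i,k} (the k = 0 term is omitted). Then ρ is a comodule coaction: (ρ ⊗ id_C) ∘ ρ = (id_{V₁} ⊗ Δ) ∘ ρ as maps V₁ → V₁ ⊗[R] C ⊗[R] C, and (id_{V₁} ⊗ ε) ∘ ρ = id_{V₁} after identifying V₁ ⊗[R] R ≅ V₁. -/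

import Mathlib

open TensorProduct

/-- Pairs `(i, j)` with `j ≤ i` in `Fin n`: positions of lower triangular matrix entries. -/
def LTIdx (n : ℕ) := {p : Fin n × Fin n // p.2 ≤ p.1}

/-- Indices `i` with `i > 0`: the strictly-below-diagonal entries `e_{i,0}` of the
first column of a lower triangular matrix. -/
def ColIdx (n : ℕ) [NeZero n] := {i : Fin n // 0 < i}

/-- Proposition 1 of the paper: the restriction
`ρ(e_{i,0}) = Σ_{1 ≤ k ≤ i} e_{k,0} ⊗ e_{i,k}` of the incidence coproduct
`Δ(e_{i,j}) = Σ_{j ≤ k ≤ i} e_{k,j} ⊗ e_{i,k}` to the span `V₁` of the strictly-below-diagonal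
first-column entries is a comodule coaction:
`(ρ ⊗ id) ∘ ρ = (id ⊗ Δ) ∘ ρ` and `(id ⊗ ε) ∘ ρ = id`. -/
theorem first_column_coaction
    (R : Type*) [CommRing R] (n : ℕ) [NeZero n]
    (Δ : (LTIdx n →₀ R) →ₗ[R] (LTIdx n →₀ R) ⊗[R] (LTIdx n →₀ R))
    (hΔ : ∀ s : LTIdx n,
      Δ (Finsupp.single s 1) =
        ∑ k ∈ (Finset.Icc s.1.2 s.1.1).attach,
          Finsupp.single (⟨(k.1, s.1.2), (Finset.mem_Icc.mp k.2).1⟩ : LTIdx n) (1 : R)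
            ⊗ₜ[R]
          Finsupp.single (⟨(s.1.1, k.1), (Finset.mem_Icc.mp k.2).2⟩ : LTIdx n) (1 : R))
    (ε : (LTIdx n →₀ R) →ₗ[R] R)
    (hε : ∀ s : LTIdx n,
      ε (Finsupp.single s 1) = if s.1.1 = s.1.2 then (1 : R) else 0)
    (ρ : (ColIdx n →₀ R) →ₗ[R] (ColIdx n →₀ R) ⊗[R] (LTIdx n →₀ R))
    (hρ : ∀ i : ColIdx n,
      ρ (Finsupp.single i 1) =
        ∑ k ∈ (Finset.Ioc (0 : Fin n) i.1).attach,
          Finsupp.single (⟨k.1, (Finset.mem_Ioc.mp k.2).1⟩ : ColIdx n) (1 : R)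
            ⊗ₜ[R]
          Finsupp.single (⟨(i.1, k.1), (Finset.mem_Ioc.mp k.2).2⟩ : LTIdx n) (1 : R)) :
    ((TensorProduct.assoc R _ _ _).toLinearMap ∘ₗ
        (TensorProduct.map ρ LinearMap.id) ∘ₗ ρ =
      (TensorProduct.map LinearMap.id Δ) ∘ₗ ρ) ∧
    ((TensorProduct.rid R (ColIdx n →₀ R)).toLinearMap ∘ₗ
        (TensorProduct.map LinearMap.id ε) ∘ₗ ρ = LinearMap.id) := by
  classical
  have hρ' : ∀ i : ColIdx n, ρ (Finsupp.single i 1) =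
      ∑ k ∈ (Finset.Ioc (0 : Fin n) i.1).attach,
        Finsupp.single (α := ColIdx n) ⟨k.1, (Finset.mem_Ioc.mp k.2).1⟩ (1 : R) ⊗ₜ[R]
          Finsupp.single (α := LTIdx n) ⟨(i.1, k.1), (Finset.mem_Ioc.mp k.2).2⟩ (1 : R) := hρ
  have hρ'' : ∀ (x : Fin n) (h : 0 < x), ρ (Finsupp.single (α := ColIdx n) ⟨x, h⟩ 1) =
      ∑ k ∈ (Finset.Ioc (0 : Fin n) x).attach,
        Finsupp.single (α := ColIdx n) ⟨k.1, (Finset.mem_Ioc.mp k.2).1⟩ (1 : R) ⊗ₜ[R]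
          Finsupp.single (α := LTIdx n) ⟨(x, k.1), (Finset.mem_Ioc.mp k.2).2⟩ (1 : R) :=
    fun x h => hρ' ⟨x, h⟩
  have hΔ' : ∀ (a b : Fin n) (h : b ≤ a), Δ (Finsupp.single (α := LTIdx n) ⟨(a, b), h⟩ 1) =
      ∑ k ∈ (Finset.Icc b a).attach,
        Finsupp.single (α := LTIdx n) ⟨(k.1, b), (Finset.mem_Icc.mp k.2).1⟩ (1 : R) ⊗ₜ[R]
          Finsupp.single (α := LTIdx n) ⟨(a, k.1), (Finset.mem_Icc.mp k.2).2⟩ (1 : R) :=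
    fun a b h => hΔ ⟨(a, b), h⟩
  constructor
  · apply Finsupp.lhom_ext
    intro i b
    have hb : (Finsupp.single i b : ColIdx n →₀ R) = b • Finsupp.single i (1 : R) := by
      rw [Finsupp.smul_single, smul_eq_mul, mul_one]
    rw [hb, map_smul, map_smul]
    congr 1
    simp only [LinearMap.comp_apply, hρ', hρ'', map_sum, TensorProduct.map_tmul,
      LinearMap.id_apply, hΔ', TensorProduct.tmul_sum, TensorProduct.sum_tmul,
      LinearEquiv.coe_coe, TensorProduct.assoc_tmul]
    set F : Fin n → Fin n →
        (ColIdx n →₀ R) ⊗[R] ((LTIdx n →₀ R) ⊗[R] (LTIdx n →₀ R)) :=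
      fun l k =>
        if h : 0 < l ∧ l ≤ k ∧ k ≤ i.1 then
          Finsupp.single (⟨l, h.1⟩ : ColIdx n) (1 : R) ⊗ₜ[R]
            (Finsupp.single (⟨(k, l), h.2.1⟩ : LTIdx n) (1 : R) ⊗ₜ[R]
              Finsupp.single (⟨(i.1, k), h.2.2⟩ : LTIdx n) (1 : R))
        else 0 with hF
    have hL : ∀ x, x ∈ Finset.Ioc (0 : Fin n) i.1 →
        (∑ l ∈ (Finset.Ioc (0 : Fin n) x).attach, F l.1 x) = ∑ l : Fin n, F l x := by
      intro x _
      rw [Finset.sum_attach (Finset.Ioc (0 : Fin n) x) (fun l => F l x)]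
      apply Finset.sum_subset (Finset.subset_univ _)
      intro l _ hl
      rw [Finset.mem_Ioc] at hl
      simp only [hF]; rw [dif_neg (by tauto)]
    have hR : ∀ x, x ∈ Finset.Ioc (0 : Fin n) i.1 →
        (∑ m ∈ (Finset.Icc x i.1).attach, F x m.1) = ∑ m : Fin n, F x m := by
      intro x hx
      rw [Finset.mem_Ioc] at hx
      rw [Finset.sum_attach (Finset.Icc x i.1) (fun m => F x m)]
      apply Finset.sum_subset (Finset.subset_univ _)
      intro m _ hm
      rw [Finset.mem_Icc] at hm
      simp only [hF]; rw [dif_neg (by tauto)]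
    calc
      ((∑ k ∈ (Finset.Ioc (0 : Fin n) i.1).attach,
          ∑ l ∈ (Finset.Ioc (0 : Fin n) k.1).attach,
            Finsupp.single (⟨l.1, (Finset.mem_Ioc.mp l.2).1⟩ : ColIdx n) (1 : R) ⊗ₜ[R]
              (Finsupp.single (⟨(k.1, l.1), (Finset.mem_Ioc.mp l.2).2⟩ : LTIdx n) (1 : R) ⊗ₜ[R]
                Finsupp.single (⟨(i.1, k.1), (Finset.mem_Ioc.mp k.2).2⟩ : LTIdx n) (1 : R))) :
            (ColIdx n →₀ R) ⊗[R] ((LTIdx n →₀ R) ⊗[R] (LTIdx n →₀ R)))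
          = ∑ k ∈ (Finset.Ioc (0 : Fin n) i.1).attach, ∑ l ∈ (Finset.Ioc (0 : Fin n) k.1).attach,
              F l.1 k.1 := by
            refine Finset.sum_congr rfl fun k _ => Finset.sum_congr rfl fun l _ => ?_
            have hk := Finset.mem_Ioc.mp k.2
            have hl := Finset.mem_Ioc.mp l.2
            simp only [hF]; rw [dif_pos ⟨hl.1, hl.2, hk.2⟩]
      _ = ∑ k ∈ Finset.Ioc (0 : Fin n) i.1, ∑ l : Fin n, F l k := by
            rw [← Finset.sum_attach (Finset.Ioc (0 : Fin n) i.1)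
              (fun k => ∑ l : Fin n, F l k)]
            exact Finset.sum_congr rfl fun k _ => hL k.1 k.2
      _ = ∑ k : Fin n, ∑ l : Fin n, F l k := by
            apply Finset.sum_subset (Finset.subset_univ _)
            intro k _ hk
            rw [Finset.mem_Ioc] at hk
            apply Finset.sum_eq_zero
            intro l _
            simp only [hF]; rw [dif_neg (fun h => hk ⟨lt_of_lt_of_le h.1 h.2.1, h.2.2⟩)]
      _ = ∑ l : Fin n, ∑ k : Fin n, F l k := Finset.sum_comm
      _ = ∑ k : Fin n, ∑ m : Fin n, F k m := rfl
      _ = ∑ k ∈ Finset.Ioc (0 : Fin n) i.1, ∑ m : Fin n, F k m := by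
            symm
            apply Finset.sum_subset (Finset.subset_univ _)
            intro k _ hk
            rw [Finset.mem_Ioc] at hk
            apply Finset.sum_eq_zero
            intro m _
            simp only [hF]; rw [dif_neg (fun h => hk ⟨h.1, le_trans h.2.1 h.2.2⟩)]
      _ = ∑ k ∈ (Finset.Ioc (0 : Fin n) i.1).attach,
            ∑ m ∈ (Finset.Icc k.1 i.1).attach, F k.1 m.1 := by
            rw [← Finset.sum_attach (Finset.Ioc (0 : Fin n) i.1)
              (fun k => ∑ m : Fin n, F k m)]
            exact (Finset.sum_congr rfl fun k _ => (hR k.1 k.2).symm)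
      _ = _ := by
            refine Finset.sum_congr rfl fun k _ => Finset.sum_congr rfl fun m _ => ?_
            have hk := Finset.mem_Ioc.mp k.2
            have hm := Finset.mem_Icc.mp m.2
            simp only [hF]; rw [dif_pos ⟨hk.1, hm.1, hm.2⟩]
  · apply Finsupp.lhom_ext
    intro i b
    have hb : (Finsupp.single i b : ColIdx n →₀ R) = b • Finsupp.single i (1 : R) := by
      rw [Finsupp.smul_single, smul_eq_mul, mul_one]
    rw [hb, map_smul, map_smul]
    congr 1
    simp only [LinearMap.comp_apply, hρ', hρ'', map_sum, TensorProduct.map_tmul,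
      LinearMap.id_apply, hε, LinearEquiv.coe_coe, TensorProduct.rid_tmul]
    have hi : i.1 ∈ Finset.Ioc (0 : Fin n) i.1 := Finset.mem_Ioc.mpr ⟨i.2, le_refl _⟩
    rw [Finset.sum_eq_single (⟨i.1, hi⟩ : {x // x ∈ Finset.Ioc (0 : Fin n) i.1})]
    · erw [hε]
      simp
      rfl
    · intro c _ hc
      have : i.1 ≠ c.1 := fun h => hc (Subtype.ext h.symm)
      erw [hε]
      simp [this]
    · intro h
      exact absurd (Finset.mem_attach _ _) h
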